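/- Let (X_n) be a DDD of X with predecomposition space Y = [X_n^*] ⊂ X^*. Then Y separates the points of X if and only if ∩_n X[n,∞) = {0}. -/

import Mathlib

open Submodule Set Filter Topology

variable {E : Type*} [NormedAddCommGroup E] [NormedSpace ℝ E]

/-- A sequence of subspaces is a DDD: finite-dimensional, total and minimal. -/
def IsDDD (X : ℕ → Submodule ℝ E) : Prop :=
  (∀ n, FiniteDimensional ℝ (X n)) ∧
  (⨆ n, X n).topologicalClosure = ⊤ ∧
  ∀ n, X n ⊓ (⨆ m ∈ {m | m ≠ n}, X m).topologicalClosure = ⊥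

/-- `(W i)` is a finite-dimensional decomposition of its closed linear span:
every element of the closed span is the limit of partial sums of a unique
sequence of vectors `w i ∈ W i`. -/
def IsFDDof (W : ℕ → Submodule ℝ E) : Prop :=
  ∀ x ∈ (⨆ i, W i).topologicalClosure, ∃! w : ℕ → E,
    (∀ i, w i ∈ W i) ∧
      Filter.Tendsto (fun N => ∑ i ∈ Finset.range N, w i) Filter.atTop (nhds x)

/-- Skipped blocking decomposition: a DDD such that every skipped sequence of
blocks is an FDD of its closed linear span. -/
def IsSBD (X : ℕ → Submodule ℝ E) : Prop :=
  IsDDD X ∧ ∀ n m : ℕ → ℕ, (∀ i, n i ≤ m i) → (∀ i, m i + 1 < n (i + 1)) →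
    IsFDDof (fun i => ⨆ j ∈ Set.Icc (n i) (m i), X j)

/-- Minimal f.d. sequence which is a skipped blocking decomposition of its closed span. -/
def IsSBDofSpan (W : ℕ → Submodule ℝ E) : Prop :=
  (∀ n, FiniteDimensional ℝ (W n)) ∧
  (∀ n, W n ⊓ (⨆ m ∈ {m | m ≠ n}, W m).topologicalClosure = ⊥) ∧
  ∀ n m : ℕ → ℕ, (∀ i, n i ≤ m i) → (∀ i, m i + 1 < n (i + 1)) →
    IsFDDof (fun i => ⨆ j ∈ Set.Icc (n i) (m i), W j)

/-- Norm of the skipped projection `R_{m,k}` onto `X[0,m)` with kernel the closed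
span of the tail `X[k+1,∞)` (the spaces `X_m, …, X_k` are skipped). -/
noncomputable def skippedNorm (X : ℕ → Submodule ℝ E) (m k : ℕ) : ℝ :=
  sInf {C : ℝ | 0 ≤ C ∧ ∀ a ∈ (⨆ i ∈ Set.Iio m, X i),
    ∀ b ∈ (⨆ i ∈ Set.Ici (k + 1), X i).topologicalClosure, ‖a‖ ≤ C * ‖a + b‖}

/-- Annihilator of a subspace in the continuous dual. -/
noncomputable def ann {F : Type*} [NormedAddCommGroup F] [NormedSpace ℝ F] (S : Submodule ℝ F) :
    Submodule ℝ (F →L[ℝ] ℝ) where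
  carrier := {f | ∀ x ∈ S, f x = 0}
  add_mem' := by intro f g hf hg x hx; simp [hf x hx, hg x hx]
  zero_mem' := by intro x hx; simp
  smul_mem' := by intro c f hf x hx; simp [hf x hx]

/-- The predecomposition space `Y = [X_n^*]` of a DDD, where
`X_n^* = [X_m]^⊥_{m ≠ n}`. -/
noncomputable def predecomp (X : ℕ → Submodule ℝ E) : Submodule ℝ (E →L[ℝ] ℝ) :=
  (⨆ n, ann ((⨆ m ∈ {m | m ≠ n}, X m).topologicalClosure)).topologicalClosure

/-- A sequence of subspaces is boundedly complete: boundedness of the partial sums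
of a sequence of vectors from the subspaces implies norm convergence. -/
def IsBddCompl (W : ℕ → Submodule ℝ E) : Prop :=
  ∀ v : ℕ → E, (∀ i, v i ∈ W i) →
    BddAbove (Set.range fun N => ‖∑ i ∈ Finset.range N, v i‖) →
    ∃ s : E, Filter.Tendsto (fun N => ∑ i ∈ Finset.range N, v i) Filter.atTop (nhds s)

/-- A Schauder basis of `E`. -/
def IsSchauderBasis (e : ℕ → E) : Prop :=
  ∀ x : E, ∃! a : ℕ → ℝ,
    Filter.Tendsto (fun N => ∑ i ∈ Finset.range N, a i • e i) Filter.atTop (nhds x)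

/-- For a DDD, the predecomposition space `Y` separates the points
of `X` iff `⋂_n X[n,∞) = {0}`. -/
lemma aux_hb (S : Submodule ℝ E) (hS : IsClosed (S : Set E)) {x : E} (hx : x ∉ S) :
    ∃ f : E →L[ℝ] ℝ, (∀ a ∈ S, f a = 0) ∧ f x ≠ 0 := by
  obtain ⟨f, u, hu, hux⟩ := geometric_hahn_banach_closed_point (S.convex) hS hx
  have h0 : ∀ a ∈ S, f a = 0 := by
    intro a ha
    by_contra h
    have h2 := hu (((u + 1) / f a) • a) (S.smul_mem _ ha)
    rw [map_smul, smul_eq_mul, div_mul_cancel₀ _ h] at h2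
    linarith
  have hu0 : (0 : ℝ) < u := by simpa using hu 0 S.zero_mem
  exact ⟨f, h0, by intro h; rw [h] at hux; linarith⟩

lemma aux_sup_closed (p q : Submodule ℝ E) [FiniteDimensional ℝ p]
    (hq : IsClosed (q : Set E)) : IsClosed ((p ⊔ q : Submodule ℝ E) : Set E) := by
  haveI : IsClosed (q : Set E) := hq
  have hcont : Continuous q.mkQ :=
    AddMonoidHomClass.continuous_of_bound q.mkQ 1 fun m => by
      simpa using Submodule.Quotient.norm_mk_le q m
  have hcl : IsClosed ((Submodule.map q.mkQ p : Submodule ℝ (E ⧸ q)) : Set (E ⧸ q)) :=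
    Submodule.closed_of_finiteDimensional _
  have key : p ⊔ q = Submodule.comap q.mkQ (Submodule.map q.mkQ p) := by
    rw [Submodule.comap_map_eq, Submodule.ker_mkQ]
  rw [key]
  exact hcl.preimage hcont

theorem stmt10 [CompleteSpace E] (X : ℕ → Submodule ℝ E) (hX : IsDDD X) :
    (∀ x : E, x ≠ 0 → ∃ y ∈ predecomp X, y x ≠ 0) ↔
      (⨅ n, (⨆ j ∈ Set.Ici n, X j).topologicalClosure) = ⊥ := by
  obtain ⟨hfd, htotal, hmin⟩ := hX
  set M : ℕ → Submodule ℝ E := fun k => (⨆ m ∈ {m | m ≠ k}, X m).topologicalClosure with hM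
  have htailM : ∀ n, (⨆ j ∈ Set.Ici (n + 1), X j).topologicalClosure ≤ M n := by
    intro n
    apply Submodule.topologicalClosure_mono
    refine iSup₂_le fun j hj => ?_
    exact le_iSup₂_of_le j (by simp only [Set.mem_Ici] at hj; simp only [Set.mem_setOf_eq]; omega) le_rfl
  constructor
  · intro hsep
    rw [eq_bot_iff]
    intro x hx
    rw [Submodule.mem_bot]
    by_contra hx0
    obtain ⟨y, hy, hyx⟩ := hsep x hx0
    apply hyx
    have hker : predecomp X ≤ LinearMap.ker (ContinuousLinearMap.apply ℝ ℝ x : (E →L[ℝ] ℝ) →ₗ[ℝ] ℝ) := by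
      apply Submodule.topologicalClosure_minimal
      · refine iSup_le fun n f hf => ?_
        have hxn : x ∈ M n := htailM n ((Submodule.mem_iInf _).1 hx (n + 1))
        exact LinearMap.mem_ker.2 (hf x hxn)
      · exact ContinuousLinearMap.isClosed_ker _
    exact hker hy
  · intro hbot x hx0
    have hex : ∃ n, x ∉ (⨆ j ∈ Set.Ici n, X j).topologicalClosure := by
      by_contra h
      push_neg at h
      exact hx0 (by simpa using (hbot ▸ (Submodule.mem_iInf _).2 h : x ∈ (⊥ : Submodule ℝ E)))
    obtain ⟨n, hn⟩ := hex
    obtain ⟨f, hf0, hfx⟩ := aux_hb _ (Submodule.isClosed_topologicalClosure _) hn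
    have hMclosed : ∀ k, IsClosed ((M k : Set E)) := fun k =>
      Submodule.isClosed_topologicalClosure _
    haveI : ∀ k, FiniteDimensional ℝ (X k) := hfd
    have hcompl : ∀ k, IsCompl (X k) (M k) := by
      intro k
      constructor
      · rw [disjoint_iff]; exact hmin k
      · rw [codisjoint_iff, ← top_le_iff]
        have hle : (⨆ m, X m : Submodule ℝ E) ≤ X k ⊔ M k := by
          refine iSup_le fun m => ?_
          rcases eq_or_ne m k with rfl | hmk
          · exact le_sup_left
          · refine le_sup_of_le_right ?_
            show X m ≤ (⨆ m' ∈ {m' | m' ≠ k}, X m').topologicalClosure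
            have h1 : X m ≤ ⨆ m' ∈ {m' | m' ≠ k}, X m' := le_iSup₂_of_le m hmk le_rfl
            exact h1.trans (Submodule.le_topologicalClosure _)
        calc (⊤ : Submodule ℝ E) = (⨆ m, X m).topologicalClosure := htotal.symm
          _ ≤ X k ⊔ M k :=
            Submodule.topologicalClosure_minimal _ hle (aux_sup_closed (X k) (M k) (hMclosed k))
    let P : ∀ k, E →L[ℝ] (X k) := fun k =>
      (X k).linearProjOfClosedCompl (M k) (hcompl k)
        ((X k).closed_of_finiteDimensional) (hMclosed k)
    have hPleft : ∀ k (z : E) (hz : z ∈ X k), ((P k z : X k) : E) = z := by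
      intro k z hz
      have := Submodule.linearProjOfIsCompl_apply_left (hcompl k) ⟨z, hz⟩
      simpa [P, Submodule.coe_continuous_linearProjOfClosedCompl'] using congrArg
        (Subtype.val) this
    have hPright : ∀ k (z : E) (hz : z ∈ M k), ((P k z : X k) : E) = 0 := by
      intro k z hz
      have := Submodule.linearProjOfIsCompl_apply_right (hcompl k) ⟨z, hz⟩
      simpa [P, Submodule.coe_continuous_linearProjOfClosedCompl'] using congrArg
        (Subtype.val) this
    let g : E →L[ℝ] ℝ := ∑ k ∈ Finset.range n, f.comp ((X k).subtypeL.comp (P k))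
    have hgmem : g ∈ predecomp X := by
      refine Submodule.sum_mem _ fun k _ => ?_
      refine Submodule.le_topologicalClosure _ ?_
      refine Submodule.mem_iSup_of_mem k ?_
      intro z hz
      simp [hPright k z hz]
    have hXmM : ∀ m k, m ≠ k → (X m : Set E) ⊆ (M k : Set E) := by
      intro m k hmk z hz
      exact (le_iSup₂_of_le m hmk le_rfl).trans (Submodule.le_topologicalClosure _) hz
    have hfg : f = g := by
      have hdense : Dense ((⨆ m, X m : Submodule ℝ E) : Set E) := by
        rw [Submodule.dense_iff_topologicalClosure_eq_top]; exact htotal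
      have hspan : Submodule.span ℝ (⋃ m, (X m : Set E)) = (⨆ m, X m : Submodule ℝ E) := by
        rw [Submodule.span_iUnion]
        simp [Submodule.span_eq]
      refine ContinuousLinearMap.ext_on (s := ⋃ m, (X m : Set E)) (by rw [hspan]; exact hdense) ?_
      rintro z hz
      obtain ⟨m, hzm⟩ := Set.mem_iUnion.1 hz
      have hgz : g z = if m < n then f z else 0 := by
        have hterm : ∀ k ∈ Finset.range n,
            f (((P k z : X k) : E)) = if k = m then f z else 0 := by
          intro k hk
          rcases eq_or_ne k m with rfl | hkm
          · rw [hPleft k z hzm]; simp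
          · rw [hPright k z (hXmM m k (Ne.symm hkm) hzm)]; simp [hkm]
        have : g z = ∑ k ∈ Finset.range n, f (((P k z : X k) : E)) := by
          simp [g, ContinuousLinearMap.sum_apply]
        rw [this, Finset.sum_congr rfl hterm, Finset.sum_ite_eq' (Finset.range n) m
          (fun _ => f z)]
        simp [Finset.mem_range]
      by_cases hmn : m < n
      · rw [hgz, if_pos hmn]
      · rw [hgz, if_neg hmn]
        refine hf0 z ?_
        have hle : X m ≤ ⨆ j ∈ Set.Ici n, X j :=
          le_iSup₂_of_le m (by simp only [Set.mem_Ici]; omega) le_rfl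
        exact Submodule.le_topologicalClosure _ (hle hzm)
    exact ⟨f, hfg ▸ hgmem, hfx⟩
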